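/- arXiv:2011.03358 — 5 statements merged into one kernel-verified Lean document; each statement's English description precedes it below -/
import Mathlib

section
/- Let ΔX, ΔG ∈ ℝ^{d×m} both have full column rank m ≤ d. There exists a symmetric matrix H ∈ ℝ^{d×d} satisfying H ΔG = ΔX if and only if ΔXᵀΔG is a symmetric matrix. -/
open Matrix

lemma aux_isUnit_transpose_mul_self {d m : ℕ} (ΔG : Matrix (Fin d) (Fin m) ℝ)
    (hG : ΔG.rank = m) : IsUnit (ΔGᵀ * ΔG) := by
  rw [← Matrix.mulVec_surjective_iff_isUnit]
  have hr : (ΔGᵀ * ΔG).rank = m := by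
    rw [Matrix.rank_transpose_mul_self, hG]
  have htop : LinearMap.range (ΔGᵀ * ΔG).mulVecLin = ⊤ := by
    apply Submodule.eq_top_of_finrank_eq
    rw [← Matrix.rank] at *
    simp [hr]
  have hsurj := LinearMap.range_eq_top.mp htop
  intro y
  obtain ⟨x, hx⟩ := hsurj y
  rw [Matrix.mulVecLin_apply] at hx
  exact ⟨x, hx⟩

theorem symmetric_multisecant_solvability_iff (d m : ℕ) (hm : m ≤ d)
    (ΔX ΔG : Matrix (Fin d) (Fin m) ℝ)
    (hX : ΔX.rank = m) (hG : ΔG.rank = m) :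
    (∃ H : Matrix (Fin d) (Fin d) ℝ, H.IsSymm ∧ H * ΔG = ΔX) ↔
      (ΔXᵀ * ΔG).IsSymm := by
  constructor
  · rintro ⟨H, hsym, rfl⟩
    rw [Matrix.IsSymm] at *
    simp [Matrix.transpose_mul, hsym, Matrix.mul_assoc]
  · intro hS
    have hU : IsUnit (ΔGᵀ * ΔG) := aux_isUnit_transpose_mul_self ΔG hG
    obtain ⟨inv⟩ := hU.nonempty_invertible
    set K : Matrix (Fin m) (Fin m) ℝ := (ΔGᵀ * ΔG)⁻¹ with hK
    have hKG : K * (ΔGᵀ * ΔG) = 1 := Matrix.nonsing_inv_mul _ (hU.map Matrix.detMonoidHom)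
    have hKT : Kᵀ = K := by
      rw [hK, Matrix.transpose_nonsing_inv]
      congr 1
      rw [Matrix.transpose_mul, Matrix.transpose_transpose]
    have hE : ΔXᵀ * ΔG = ΔGᵀ * ΔX := by
      conv_lhs => rw [← hS.eq]
      rw [Matrix.transpose_mul, Matrix.transpose_transpose]
    refine ⟨ΔX * K * ΔGᵀ + ΔG * K * ΔXᵀ - ΔG * K * (ΔXᵀ * ΔG) * K * ΔGᵀ, ?_, ?_⟩
    · rw [Matrix.IsSymm]
      have h1 : ΔXᵀ * (ΔG * (K * ΔGᵀ)) = ΔGᵀ * (ΔX * (K * ΔGᵀ)) := by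
        rw [← Matrix.mul_assoc, ← Matrix.mul_assoc, hE]; simp [Matrix.mul_assoc]
      simp only [Matrix.transpose_sub, Matrix.transpose_add, Matrix.transpose_mul,
        Matrix.transpose_transpose, hKT, Matrix.mul_assoc, h1]
      abel
    · simp only [Matrix.sub_mul, Matrix.add_mul, Matrix.mul_assoc, hKG, Matrix.mul_one, hE]
      abel
end

section
/- Let A, D ∈ ℝ^{d×m}, m ≤ d, λ > 0, and Z_ref ∈ ℝ^{d×d} symmetric. The unique minimizer over symmetric matrices Z of ‖ZA − D‖_F² + (λ/2)‖Z − Z_ref‖_F² is given by Z⋆ = V₁Z₁V₁ᵀ + V₁Z₂ + Z₂ᵀV₁ᵀ + (I−P)Z_ref(I−P), where Aᵀ = UΣV₁ᵀ is an economic SVD, P = V₁V₁ᵀ, Z₁ = S ⊙ [V₁ᵀ(ADᵀ + DAᵀ + λZ_ref)V₁] with S_{ij} = 1/(σ_i² + σ_j² + λ), and Z₂ = (Σ² + λI)⁻¹V₁ᵀ(ADᵀ + λZ_ref)(I−P). -/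
open Matrix

def frobSq {m n : Type*} [Fintype m] [Fintype n] (A : Matrix m n ℝ) : ℝ :=
  ∑ i, ∑ j, (A i j) ^ 2

namespace RSP

variable {n p q : Type*} [Fintype n] [Fintype p] [Fintype q]

def ip (X Y : Matrix n p ℝ) : ℝ := ∑ i, ∑ j, X i j * Y i j

lemma frobSq_nonneg (X : Matrix n p ℝ) : 0 ≤ frobSq X := by
  apply Finset.sum_nonneg; intro i _; apply Finset.sum_nonneg; intro j _; positivity

lemma frobSq_eq_zero {X : Matrix n p ℝ} (h : frobSq X = 0) : X = 0 := by
  ext i j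
  have h1 : ∀ i ∈ Finset.univ, (0:ℝ) ≤ ∑ j, (X i j)^2 := by
    intro i _; apply Finset.sum_nonneg; intro j _; positivity
  have h2 := (Finset.sum_eq_zero_iff_of_nonneg h1).mp h i (Finset.mem_univ i)
  have h3 : ∀ j ∈ Finset.univ, (0:ℝ) ≤ (X i j)^2 := by intro j _; positivity
  have := (Finset.sum_eq_zero_iff_of_nonneg h3).mp h2 j (Finset.mem_univ j)
  simpa [pow_eq_zero_iff] using this

lemma frobSq_add (X Y : Matrix n p ℝ) :
    frobSq (X + Y) = frobSq X + 2 * ip X Y + frobSq Y := by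
  have h : ∀ i j, (X i j + Y i j)^2 = X i j ^2 + (2 * (X i j * Y i j) + Y i j ^2) := by
    intros; ring
  simp only [frobSq, ip, Matrix.add_apply, h, Finset.sum_add_distrib, Finset.mul_sum]
  ring

lemma ip_trace (X Y : Matrix n p ℝ) : ip X Y = (X * Yᵀ).trace := by
  simp [ip, Matrix.trace, Matrix.mul_apply, Matrix.diag]

lemma ip_mul_right (H : Matrix n n ℝ) (A : Matrix n p ℝ) (E : Matrix n p ℝ) :
    ip (H * A) E = ip H (E * Aᵀ) := by
  rw [ip_trace, ip_trace, Matrix.transpose_mul, Matrix.transpose_transpose,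
    Matrix.mul_assoc]

lemma ip_add_right (X Y Z : Matrix n p ℝ) : ip X (Y + Z) = ip X Y + ip X Z := by
  simp [ip, mul_add, Finset.sum_add_distrib]

lemma ip_smul_right (c : ℝ) (X Y : Matrix n p ℝ) : ip X (c • Y) = c * ip X Y := by
  simp [ip, Finset.mul_sum]; ring_nf; simp [mul_comm, mul_left_comm]

lemma ip_comm (X Y : Matrix n p ℝ) : ip X Y = ip Y X := by
  simp [ip, mul_comm]

lemma quad_decomp {dd mm : Type*} [Fintype dd] [Fintype mm] [DecidableEq dd]
    (A D : Matrix dd mm ℝ) (lam : ℝ) (Zref Zs Z : Matrix dd dd ℝ) :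
    frobSq (Z * A - D) + lam / 2 * frobSq (Z - Zref) =
      frobSq (Zs * A - D) + lam / 2 * frobSq (Zs - Zref)
      + ip (Z - Zs) ((2:ℝ) • ((Zs * A - D) * Aᵀ) + lam • (Zs - Zref))
      + (frobSq ((Z - Zs) * A) + lam / 2 * frobSq (Z - Zs)) := by
  have e1 : Z * A - D = (Zs * A - D) + (Z - Zs) * A := by rw [Matrix.sub_mul]; abel
  have e2 : Z - Zref = (Zs - Zref) + (Z - Zs) := by abel
  rw [e1, e2, frobSq_add, frobSq_add]
  have h1 : ip (Zs * A - D) ((Z - Zs) * A) = ip (Z - Zs) ((Zs * A - D) * Aᵀ) := by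
    rw [ip_comm, ip_mul_right]
  rw [h1, ip_comm (Zs - Zref) (Z - Zs), ip_add_right, ip_smul_right, ip_smul_right]
  ring

lemma ip_symm_anti {H G : Matrix n n ℝ} (hH : H.IsSymm) (hG : G + Gᵀ = 0) :
    ip H G = 0 := by
  have h1 : ip H G = (H * Gᵀ).trace := ip_trace H G
  have h2 : (H * Gᵀ).trace = (H * G).trace := by
    conv_lhs => rw [← Matrix.trace_transpose, Matrix.transpose_mul,
      Matrix.transpose_transpose, hH.eq]
    rw [Matrix.trace_mul_comm]
  have h3 : Gᵀ = -G := (add_eq_zero_iff_neg_eq.mp hG).symm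
  have h4 : ip H G = -(H * G).trace := by
    rw [h1, h3, Matrix.mul_neg, Matrix.trace_neg]
  have : ip H G = (H*G).trace := by rw [h1, h2]
  linarith

end RSP

namespace RSP

lemma optimality {dd mm : Type*} [Fintype dd] [Fintype mm] [DecidableEq dd]
    (A D : Matrix dd mm ℝ) (lam : ℝ) (hlam : 0 < lam)
    (Zref : Matrix dd dd ℝ) (hZref : Zref.IsSymm)
    (Zs : Matrix dd dd ℝ) (hsym : Zs.IsSymm)
    (hstar : Zs * (A * Aᵀ) + (A * Aᵀ) * Zs + lam • Zs
      = A * Dᵀ + D * Aᵀ + lam • Zref) :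
    (∀ Z : Matrix dd dd ℝ, Z.IsSymm →
        frobSq (Zs * A - D) + lam / 2 * frobSq (Zs - Zref) ≤
          frobSq (Z * A - D) + lam / 2 * frobSq (Z - Zref)) ∧
      (∀ Z : Matrix dd dd ℝ, Z.IsSymm →
        frobSq (Z * A - D) + lam / 2 * frobSq (Z - Zref) =
          frobSq (Zs * A - D) + lam / 2 * frobSq (Zs - Zref) → Z = Zs) := by
  set G : Matrix dd dd ℝ := (2:ℝ) • ((Zs * A - D) * Aᵀ) + lam • (Zs - Zref) with hGdef
  have hG : G + Gᵀ = (2:ℝ) • (Zs * (A * Aᵀ) + (A * Aᵀ) * Zs + lam • Zs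
      - (A * Dᵀ + D * Aᵀ + lam • Zref)) := by
    simp only [hGdef, Matrix.transpose_add, Matrix.transpose_smul, Matrix.transpose_mul,
      Matrix.transpose_sub, Matrix.transpose_transpose, hsym.eq, hZref.eq,
      Matrix.sub_mul, Matrix.mul_sub, Matrix.mul_assoc]
    module
  rw [hstar, sub_self, smul_zero] at hG
  have key : ∀ Z : Matrix dd dd ℝ, Z.IsSymm →
      frobSq (Z * A - D) + lam / 2 * frobSq (Z - Zref) =
        frobSq (Zs * A - D) + lam / 2 * frobSq (Zs - Zref)
        + (frobSq ((Z - Zs) * A) + lam / 2 * frobSq (Z - Zs)) := by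
    intro Z hZ
    have hH : (Z - Zs).IsSymm := by
      unfold Matrix.IsSymm
      rw [Matrix.transpose_sub, hZ.eq, hsym.eq]
    have h0 : ip (Z - Zs) G = 0 := ip_symm_anti hH hG
    rw [quad_decomp A D lam Zref Zs Z, ← hGdef, h0, add_zero]
  constructor
  · intro Z hZ
    rw [key Z hZ]
    have := frobSq_nonneg ((Z - Zs) * A)
    have := frobSq_nonneg (Z - Zs)
    nlinarith
  · intro Z hZ heq
    rw [key Z hZ] at heq
    have h1 := frobSq_nonneg ((Z - Zs) * A)
    have h2 := frobSq_nonneg (Z - Zs)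
    have h3 : frobSq (Z - Zs) = 0 := by nlinarith
    have := frobSq_eq_zero h3
    rwa [sub_eq_zero] at this

end RSP

open RSP in
theorem regularized_symmetric_procrustes_solution (d m : ℕ)
    (A D : Matrix (Fin d) (Fin m) ℝ) (hm : m ≤ d)
    (lam : ℝ) (hlam : 0 < lam)
    (Zref : Matrix (Fin d) (Fin d) ℝ) (hZref : Zref.IsSymm)
    -- economic SVD of Aᵀ : `Aᵀ = U Σ V₁ᵀ`
    (U : Matrix (Fin m) (Fin m) ℝ) (σ : Fin m → ℝ)
    (V₁ : Matrix (Fin d) (Fin m) ℝ)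
    (hU : Uᵀ * U = 1) (hV : V₁ᵀ * V₁ = 1) (hσ : ∀ i, 0 ≤ σ i)
    (hSVD : Aᵀ = U * Matrix.diagonal σ * V₁ᵀ)
    (P : Matrix (Fin d) (Fin d) ℝ) (hP : P = V₁ * V₁ᵀ)
    (S : Matrix (Fin m) (Fin m) ℝ)
    (hS : S = Matrix.of fun i j => 1 / (σ i ^ 2 + σ j ^ 2 + lam))
    (Z₁ : Matrix (Fin m) (Fin m) ℝ)
    (hZ₁ : Z₁ = Matrix.of fun i j =>
      S i j * ((V₁ᵀ * (A * Dᵀ + D * Aᵀ + lam • Zref) * V₁) i j))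
    (Z₂ : Matrix (Fin m) (Fin d) ℝ)
    (hZ₂ : Z₂ = (Matrix.diagonal (fun i => σ i ^ 2) + lam • 1)⁻¹ *
      (V₁ᵀ * (A * Dᵀ + lam • Zref) * (1 - P)))
    (Zs : Matrix (Fin d) (Fin d) ℝ)
    (hZs : Zs = V₁ * Z₁ * V₁ᵀ + V₁ * Z₂ + Z₂ᵀ * V₁ᵀ + (1 - P) * Zref * (1 - P)) :
    Zs.IsSymm ∧
      (∀ Z : Matrix (Fin d) (Fin d) ℝ, Z.IsSymm →
        frobSq (Zs * A - D) + lam / 2 * frobSq (Zs - Zref) ≤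
          frobSq (Z * A - D) + lam / 2 * frobSq (Z - Zref)) ∧
      (∀ Z : Matrix (Fin d) (Fin d) ℝ, Z.IsSymm →
        frobSq (Z * A - D) + lam / 2 * frobSq (Z - Zref) =
          frobSq (Zs * A - D) + lam / 2 * frobSq (Zs - Zref) → Z = Zs) := by
  -- notation
  set D₂ : Matrix (Fin m) (Fin m) ℝ := Matrix.diagonal (fun i => σ i ^ 2) with hD₂
  set C : Matrix (Fin d) (Fin d) ℝ := A * Dᵀ + D * Aᵀ + lam • Zref with hC
  set C₂ : Matrix (Fin d) (Fin d) ℝ := A * Dᵀ + lam • Zref with hC₂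
  set T : Matrix (Fin m) (Fin m) ℝ := D₂ + lam • 1 with hT
  -- basic facts
  have hA : A = V₁ * Matrix.diagonal σ * Uᵀ := by
    have := congrArg Matrix.transpose hSVD
    simpa [Matrix.transpose_mul, Matrix.diagonal_transpose, Matrix.mul_assoc] using this
  have hPsymm : Pᵀ = P := by rw [hP, Matrix.transpose_mul, Matrix.transpose_transpose]
  have hPV : (1 - P) * V₁ = 0 := by
    rw [Matrix.sub_mul, Matrix.one_mul, hP, Matrix.mul_assoc, hV, Matrix.mul_one, sub_self]
  have hVtP : V₁ᵀ * (1 - P) = 0 := by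
    rw [Matrix.mul_sub, Matrix.mul_one, hP, ← Matrix.mul_assoc, hV, Matrix.one_mul, sub_self]
  have hCsymm : Cᵀ = C := by
    rw [hC, Matrix.transpose_add, Matrix.transpose_add, Matrix.transpose_mul,
      Matrix.transpose_mul, Matrix.transpose_transpose, Matrix.transpose_transpose,
      Matrix.transpose_smul, hZref.eq]
    abel
  have hC₂t : C₂ᵀ = D * Aᵀ + lam • Zref := by
    rw [hC₂, Matrix.transpose_add, Matrix.transpose_mul, Matrix.transpose_transpose,
      Matrix.transpose_smul, hZref.eq]
  -- B = A * Aᵀ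
  have hB : A * Aᵀ = V₁ * (D₂ * V₁ᵀ) := by
    rw [hSVD, hA]
    simp only [Matrix.mul_assoc]
    rw [← Matrix.mul_assoc Uᵀ U, hU, Matrix.one_mul, ← Matrix.mul_assoc (Matrix.diagonal σ),
      Matrix.diagonal_mul_diagonal,
      show (fun i => σ i * σ i) = fun i => σ i ^ 2 from funext fun i => (sq (σ i)).symm, hD₂]
  -- T invertible
  have hTdiag : T = Matrix.diagonal (fun i => σ i ^ 2 + lam) := by
    rw [hT, hD₂]
    ext i j
    by_cases h : i = j <;> simp [h, Matrix.diagonal_apply, Matrix.one_apply]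
  have hTdet : IsUnit T.det := by
    rw [hTdiag, Matrix.det_diagonal]
    refine isUnit_iff_ne_zero.mpr (ne_of_gt ?_)
    exact Finset.prod_pos fun i _ => by positivity
  have hTsymm : Tᵀ = T := by rw [hTdiag, Matrix.diagonal_transpose]
  have hTinv : T * T⁻¹ = 1 := Matrix.mul_nonsing_inv T hTdet
  have hTinvsymm : (T⁻¹)ᵀ = T⁻¹ := by rw [Matrix.transpose_nonsing_inv, hTsymm]
  -- Z₂ facts
  have hTZ₂ : T * Z₂ = V₁ᵀ * (C₂ * (1 - P)) := by
    rw [hZ₂, ← Matrix.mul_assoc, hTinv, Matrix.one_mul, Matrix.mul_assoc]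
  have hZ₂V : Z₂ * V₁ = 0 := by
    rw [hZ₂, Matrix.mul_assoc, Matrix.mul_assoc, hPV, Matrix.mul_zero, Matrix.mul_zero]
  have hZ₂symmfact : Z₂ᵀ * T = (1 - P) * (C₂ᵀ * V₁) := by
    have := congrArg Matrix.transpose hTZ₂
    rw [Matrix.transpose_mul, Matrix.transpose_mul, Matrix.transpose_mul, hTsymm,
      Matrix.transpose_sub, Matrix.transpose_one, hPsymm, Matrix.mul_assoc,
      Matrix.transpose_transpose] at this
    exact this
  -- Sylvester identity
  have hSyl : D₂ * Z₁ + Z₁ * D₂ + lam • Z₁ = V₁ᵀ * (C * V₁) := by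
    have hden : ∀ i j : Fin m, σ i ^ 2 + σ j ^ 2 + lam ≠ 0 := fun i j => by positivity
    rw [← Matrix.mul_assoc]
    ext i j
    simp only [Matrix.add_apply, Matrix.smul_apply, Matrix.diagonal_mul, Matrix.mul_diagonal,
      hZ₁, hS, Matrix.of_apply, smul_eq_mul, hD₂, ← hC]
    field_simp
  -- symmetry of Zs
  have hZ₁symm : Z₁ᵀ = Z₁ := by
    have hM : (V₁ᵀ * (A * Dᵀ + D * Aᵀ + lam • Zref) * V₁)ᵀ
        = V₁ᵀ * (A * Dᵀ + D * Aᵀ + lam • Zref) * V₁ := by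
      rw [Matrix.transpose_mul, Matrix.transpose_mul, Matrix.transpose_transpose, ← hC, hCsymm,
        hC, Matrix.mul_assoc]
    ext i j
    have := congrFun (congrFun hM j) i
    simp only [Matrix.transpose_apply] at this ⊢
    rw [hZ₁]
    simp only [Matrix.of_apply, hS]
    rw [this]
    ring
  have hsym : Zs.IsSymm := by
    unfold Matrix.IsSymm
    rw [hZs]
    simp only [Matrix.transpose_add, Matrix.transpose_mul, Matrix.transpose_transpose,
      Matrix.transpose_sub, Matrix.transpose_one, hPsymm, hZ₁symm, hZref.eq,
      Matrix.mul_assoc]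
    abel
  -- the stationarity identity
  -- collapsing facts
  have hcol1 : ∀ X : Matrix (Fin m) (Fin d) ℝ, V₁ᵀ * (V₁ * X) = X := fun X => by
    rw [← Matrix.mul_assoc, hV, Matrix.one_mul]
  have hcol2 : ∀ X : Matrix (Fin m) (Fin d) ℝ, (1 - P) * (V₁ * X) = 0 := fun X => by
    rw [← Matrix.mul_assoc, hPV, Matrix.zero_mul]
  have hcol3 : ∀ X : Matrix (Fin d) (Fin d) ℝ, V₁ᵀ * ((1 - P) * X) = 0 := fun X => by
    rw [← Matrix.mul_assoc, hVtP, Matrix.zero_mul]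
  have hVZ₂t : V₁ᵀ * Z₂ᵀ = 0 := by
    rw [← Matrix.transpose_mul, hZ₂V, Matrix.transpose_zero]
  have hcol4 : ∀ X : Matrix (Fin m) (Fin d) ℝ, V₁ᵀ * (Z₂ᵀ * X) = 0 := fun X => by
    rw [← Matrix.mul_assoc, hVZ₂t, Matrix.zero_mul]
  have hcol5 : ∀ X : Matrix (Fin m) (Fin d) ℝ, Z₂ * (V₁ * X) = 0 := fun X => by
    rw [← Matrix.mul_assoc, hZ₂V, Matrix.zero_mul]
  have hAtP : Aᵀ * (1 - P) = 0 := by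
    rw [hSVD, Matrix.mul_assoc, Matrix.mul_assoc, hVtP, Matrix.mul_zero, Matrix.mul_zero]
  have hPA : (1 - P) * A = 0 := by
    rw [hA, ← Matrix.mul_assoc, ← Matrix.mul_assoc, hPV, Matrix.zero_mul, Matrix.zero_mul]
  have hcolA : ∀ X : Matrix (Fin m) (Fin d) ℝ, (1 - P) * (A * X) = 0 := fun X => by
    rw [← Matrix.mul_assoc, hPA, Matrix.zero_mul]
  -- the three blocks
  have E1 : V₁ * ((D₂ * Z₁ + Z₁ * D₂ + lam • Z₁) * V₁ᵀ)
      = V₁ * (V₁ᵀ * (C * V₁) * V₁ᵀ) := by rw [hSyl]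
  simp only [Matrix.add_mul, Matrix.mul_add, Matrix.smul_mul, Matrix.mul_smul,
    Matrix.mul_assoc] at E1
  have E2 : V₁ * (T * Z₂) = V₁ * (V₁ᵀ * (C₂ * (1 - P))) := by rw [hTZ₂]
  rw [hT] at E2
  simp only [Matrix.add_mul, Matrix.mul_add, Matrix.smul_mul, Matrix.mul_smul,
    Matrix.one_mul, Matrix.mul_assoc] at E2
  have E3 : Z₂ᵀ * T * V₁ᵀ = (1 - P) * (C₂ᵀ * V₁) * V₁ᵀ := by rw [hZ₂symmfact]
  rw [hT] at E3
  simp only [Matrix.add_mul, Matrix.mul_add, Matrix.smul_mul, Matrix.mul_smul,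
    Matrix.mul_one, Matrix.mul_assoc] at E3
  -- assembling the right-hand side
  have hC1 : C₂ * (1 - P) = C * (1 - P) := by
    have h0 : (D * Aᵀ) * (1 - P) = 0 := by rw [Matrix.mul_assoc, hAtP, Matrix.mul_zero]
    rw [hC, hC₂]
    simp only [Matrix.add_mul]
    rw [h0]
    abel
  have hC2 : (1 - P) * C₂ᵀ = (1 - P) * C := by
    have h0 : (1 - P) * (A * Dᵀ) = 0 := hcolA Dᵀ
    rw [hC₂t, hC]
    simp only [Matrix.mul_add]
    rw [h0]
    abel
  have hfinal : V₁ * (V₁ᵀ * (C * (V₁ * V₁ᵀ))) + V₁ * (V₁ᵀ * (C₂ * (1 - P)))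
      + (1 - P) * (C₂ᵀ * (V₁ * V₁ᵀ)) + lam • ((1 - P) * (Zref * (1 - P))) = C := by
    rw [← hP]
    have e1 : V₁ * (V₁ᵀ * (C * P)) = P * (C * P) := by rw [hP, Matrix.mul_assoc]
    have e2 : V₁ * (V₁ᵀ * (C₂ * (1 - P))) = P * (C₂ * (1 - P)) := by
      rw [hP, Matrix.mul_assoc]
    have e3 : (1 - P) * (C₂ᵀ * P) = (1 - P) * (C * P) := by
      rw [← Matrix.mul_assoc, hC2, Matrix.mul_assoc]
    have e4 : lam • ((1 - P) * (Zref * (1 - P))) = (1 - P) * (C * (1 - P)) := by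
      rw [← hC1, hC₂]
      simp only [Matrix.add_mul, Matrix.mul_add, Matrix.smul_mul, Matrix.mul_smul,
        Matrix.mul_assoc]
      rw [hcolA (Dᵀ * (1 - P))]
      rw [zero_add]
    rw [e1, e2, e3, e4, hC1]
    have hPsum : P + (1 - P) = (1 : Matrix (Fin d) (Fin d) ℝ) := by abel
    calc P * (C * P) + P * (C * (1 - P)) + (1 - P) * (C * P) + (1 - P) * (C * (1 - P))
        = (P + (1 - P)) * (C * (P + (1 - P))) := by
          simp only [Matrix.add_mul, Matrix.mul_add]; abel
      _ = C := by rw [hPsum, Matrix.mul_one, Matrix.one_mul]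
  have hstar : Zs * (A * Aᵀ) + (A * Aᵀ) * Zs + lam • Zs
      = A * Dᵀ + D * Aᵀ + lam • Zref := by
    rw [show A * Dᵀ + D * Aᵀ + lam • Zref = C from hC.symm]
    rw [hB, hZs]
    simp only [Matrix.add_mul, Matrix.mul_add, smul_add, Matrix.smul_mul, Matrix.mul_smul,
      Matrix.mul_assoc]
    simp only [hcol1, hcol2, hcol3, hcol4, hcol5, Matrix.mul_zero, Matrix.zero_mul,
      smul_zero, add_zero, zero_add]
    rw [← hfinal, ← E1, ← E2, ← E3]
    abel
  obtain ⟨hle, huniq⟩ := optimality A D lam hlam Zref hZref Zs hsym hstar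
  exact ⟨hsym, hle, huniq⟩
end

section
/- For λ > 0, the problem of minimizing ‖ΣZ₁ − D₁‖_F² + λ‖Z₁ − R₁‖_F² over symmetric m×m matrices Z₁, where Σ = diag(σ₁,…,σ_m) with σ_i ≥ 0 and R₁ is symmetric, has the unique solution whose (i,j) entry is (σ_i(D₁)_{ij} + σ_j(D₁)_{ji} + 2λ(R₁)_{ij})/(σ_i² + σ_j² + 2λ). -/
open Matrix

private lemma ptwise (s1 s2 lam d1 d2 r t : ℝ) (hc : s1 ^ 2 + s2 ^ 2 + 2 * lam ≠ 0) :
    (s1 * t - d1) ^ 2 + (s2 * t - d2) ^ 2 + lam * (t - r) ^ 2 + lam * (t - r) ^ 2 =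
      ((s1 * ((s1 * d1 + s2 * d2 + 2 * lam * r) / (s1 ^ 2 + s2 ^ 2 + 2 * lam)) - d1) ^ 2 +
        (s2 * ((s1 * d1 + s2 * d2 + 2 * lam * r) / (s1 ^ 2 + s2 ^ 2 + 2 * lam)) - d2) ^ 2 +
        lam * (((s1 * d1 + s2 * d2 + 2 * lam * r) / (s1 ^ 2 + s2 ^ 2 + 2 * lam)) - r) ^ 2 +
        lam * (((s1 * d1 + s2 * d2 + 2 * lam * r) / (s1 ^ 2 + s2 ^ 2 + 2 * lam)) - r) ^ 2) +
      (s1 ^ 2 + s2 ^ 2 + 2 * lam) *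
        (t - (s1 * d1 + s2 * d2 + 2 * lam * r) / (s1 ^ 2 + s2 ^ 2 + 2 * lam)) ^ 2 := by
  have hx : (s1 * d1 + s2 * d2 + 2 * lam * r) / (s1 ^ 2 + s2 ^ 2 + 2 * lam) * (s1 ^ 2 + s2 ^ 2 + 2 * lam) = s1 * d1 + s2 * d2 + 2 * lam * r := div_mul_cancel₀ _ hc
  linear_combination (2 * (t - (s1 * d1 + s2 * d2 + 2 * lam * r) / (s1 ^ 2 + s2 ^ 2 + 2 * lam))) * hx

theorem diagonal_regularized_symmetric_lsq (m : ℕ)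
    (σ : Fin m → ℝ) (hσ : ∀ i, 0 ≤ σ i)
    (D₁ R₁ : Matrix (Fin m) (Fin m) ℝ) (hR : R₁.IsSymm)
    (lam : ℝ) (hlam : 0 < lam)
    (Zsol : Matrix (Fin m) (Fin m) ℝ)
    (hZsol : Zsol = Matrix.of fun i j =>
      (σ i * D₁ i j + σ j * D₁ j i + 2 * lam * R₁ i j) /
        (σ i ^ 2 + σ j ^ 2 + 2 * lam)) :
    Zsol.IsSymm ∧
      (∀ Z : Matrix (Fin m) (Fin m) ℝ, Z.IsSymm →
        frobSq (Matrix.diagonal σ * Zsol - D₁) + lam * frobSq (Zsol - R₁) ≤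
          frobSq (Matrix.diagonal σ * Z - D₁) + lam * frobSq (Z - R₁)) ∧
      (∀ Z : Matrix (Fin m) (Fin m) ℝ, Z.IsSymm →
        frobSq (Matrix.diagonal σ * Z - D₁) + lam * frobSq (Z - R₁) =
          frobSq (Matrix.diagonal σ * Zsol - D₁) + lam * frobSq (Zsol - R₁) →
        Z = Zsol) := by
  have hc : ∀ i j : Fin m, 0 < σ i ^ 2 + σ j ^ 2 + 2 * lam := by
    intro i j
    have := sq_nonneg (σ i); have := sq_nonneg (σ j); linarith
  have hZsolsymm : Zsol.IsSymm := by
    rw [hZsol]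
    ext i j
    simp only [Matrix.transpose_apply, Matrix.of_apply]
    rw [hR.apply i j]
    ring_nf
  -- doubling identity for symmetric matrices
  have double : ∀ Z : Matrix (Fin m) (Fin m) ℝ, Z.IsSymm →
      2 * (frobSq (Matrix.diagonal σ * Z - D₁) + lam * frobSq (Z - R₁)) =
        ∑ i, ∑ j, ((σ i * Z i j - D₁ i j) ^ 2 + (σ j * Z i j - D₁ j i) ^ 2 +
          lam * (Z i j - R₁ i j) ^ 2 + lam * (Z i j - R₁ i j) ^ 2) := by
    intro Z hZ
    have hswap : ∑ i, ∑ j, (σ j * Z i j - D₁ j i) ^ 2 =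
        ∑ i, ∑ j, (σ i * Z i j - D₁ i j) ^ 2 := by
      rw [Finset.sum_comm]
      refine Finset.sum_congr rfl fun i _ => Finset.sum_congr rfl fun j _ => ?_
      rw [hZ.apply i j]
    simp only [frobSq, Matrix.sub_apply, Matrix.diagonal_mul]
    simp only [Finset.sum_add_distrib, ← Finset.mul_sum]
    rw [hswap]
    ring
  -- key identity
  have key : ∀ Z : Matrix (Fin m) (Fin m) ℝ, Z.IsSymm →
      2 * (frobSq (Matrix.diagonal σ * Z - D₁) + lam * frobSq (Z - R₁)) =
        2 * (frobSq (Matrix.diagonal σ * Zsol - D₁) + lam * frobSq (Zsol - R₁)) +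
        ∑ i, ∑ j, (σ i ^ 2 + σ j ^ 2 + 2 * lam) * (Z i j - Zsol i j) ^ 2 := by
    intro Z hZ
    rw [double Z hZ, double Zsol hZsolsymm, ← Finset.sum_add_distrib]
    refine Finset.sum_congr rfl fun i _ => ?_
    rw [← Finset.sum_add_distrib]
    refine Finset.sum_congr rfl fun j _ => ?_
    have := ptwise (σ i) (σ j) lam (D₁ i j) (D₁ j i) (R₁ i j) (Z i j) (ne_of_gt (hc i j))
    rw [hZsol]
    simpa using this
  have hS : ∀ Z : Matrix (Fin m) (Fin m) ℝ,
      0 ≤ ∑ i, ∑ j, (σ i ^ 2 + σ j ^ 2 + 2 * lam) * (Z i j - Zsol i j) ^ 2 := by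
    intro Z
    refine Finset.sum_nonneg fun i _ => Finset.sum_nonneg fun j _ => ?_
    exact mul_nonneg (le_of_lt (hc i j)) (sq_nonneg _)
  refine ⟨hZsolsymm, fun Z hZ => ?_, fun Z hZ heq => ?_⟩
  · nlinarith [key Z hZ, hS Z]
  · have h0 : ∑ i, ∑ j, (σ i ^ 2 + σ j ^ 2 + 2 * lam) * (Z i j - Zsol i j) ^ 2 = 0 := by
      have := key Z hZ
      rw [heq] at this
      linarith
    ext i j
    have hterm : ∀ i ∈ Finset.univ, (∑ j, (σ i ^ 2 + σ j ^ 2 + 2 * lam) * (Z i j - Zsol i j) ^ 2) = 0 := by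
      rw [← Finset.sum_eq_zero_iff_of_nonneg
        (fun i _ => Finset.sum_nonneg fun j _ => mul_nonneg (le_of_lt (hc i j)) (sq_nonneg _))]
      exact h0
    have hij : (σ i ^ 2 + σ j ^ 2 + 2 * lam) * (Z i j - Zsol i j) ^ 2 = 0 := by
      have := (Finset.sum_eq_zero_iff_of_nonneg
        (fun j _ => mul_nonneg (le_of_lt (hc i j)) (sq_nonneg _))).mp
        (hterm i (Finset.mem_univ i)) j (Finset.mem_univ j)
      exact this
    have := (mul_eq_zero.mp hij).resolve_left (ne_of_gt (hc i j))
    have := pow_eq_zero_iff (n := 2) (by norm_num) |>.mp this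
    linarith [this]
end

section
/- Let A ∈ ℝ^{q×p}, b ∈ ℝ^q, x₀ ∈ ℝ^p, β > 0. Let x⋆ = (AᵀA + βI)⁻¹(Aᵀb + βx₀) be the minimizer of ‖Ax − b‖² + β‖x − x₀‖², and let x̂ be the minimizer of the same problem with A replaced by A + δA and b by b + δb. Then ‖x̂ − x⋆‖ ≤ (1/β)·(‖P‖‖x⋆‖ + ‖δA‖‖b‖ + ‖δb‖‖A‖ + ‖δb‖‖δA‖), where P = (A+δA)ᵀ(A+δA) − AᵀA. -/
open Matrix

noncomputable def vnorm {n : Type*} [Fintype n] (v : n → ℝ) : ℝ :=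
  ‖(WithLp.equiv 2 (n → ℝ)).symm v‖

noncomputable def mnorm {m n : Type*} [Fintype m] [Fintype n] [DecidableEq n]
    (M : Matrix m n ℝ) : ℝ :=
  ‖LinearMap.toContinuousLinearMap (Matrix.toEuclideanLin M)‖

private lemma vnorm_nonneg {n : Type*} [Fintype n] (v : n → ℝ) : 0 ≤ vnorm v :=
  norm_nonneg _

private lemma vnorm_add_le {n : Type*} [Fintype n] (v w : n → ℝ) :
    vnorm (v + w) ≤ vnorm v + vnorm w := by
  rw [vnorm, WithLp.equiv_symm_apply, WithLp.toLp_add]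
  exact norm_add_le _ _

private lemma vnorm_neg {n : Type*} [Fintype n] (v : n → ℝ) : vnorm (-v) = vnorm v := by
  rw [vnorm, WithLp.equiv_symm_apply, WithLp.toLp_neg, norm_neg]; rfl

private lemma vnorm_eq_zero {n : Type*} [Fintype n] {v : n → ℝ} (h : vnorm v = 0) : v = 0 := by
  rw [vnorm, norm_eq_zero] at h
  have := congrArg (WithLp.equiv 2 (n → ℝ)) h
  simpa using this

private lemma vnorm_mulVec_le {m n : ℕ} (M : Matrix (Fin m) (Fin n) ℝ) (v : Fin n → ℝ) :
    vnorm (M *ᵥ v) ≤ mnorm M * vnorm v := by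
  have h := (LinearMap.toContinuousLinearMap (Matrix.toEuclideanLin M)).le_opNorm
    ((WithLp.equiv 2 (Fin n → ℝ)).symm v)
  exact h

private lemma mnorm_transpose {m n : ℕ} (M : Matrix (Fin m) (Fin n) ℝ) :
    mnorm Mᵀ = mnorm M := by
  have h1 : Mᵀ = Mᴴ := (Matrix.conjTranspose_eq_transpose_of_trivial M).symm
  rw [mnorm, h1, Matrix.toEuclideanLin_conjTranspose_eq_adjoint,
    LinearMap.adjoint_toContinuousLinearMap]
  exact ContinuousLinearMap.adjoint.norm_map _

private lemma dotProduct_self_eq {n : ℕ} (v : Fin n → ℝ) : v ⬝ᵥ v = vnorm v ^ 2 := by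
  have h := real_inner_self_eq_norm_sq ((WithLp.equiv 2 (Fin n → ℝ)).symm v)
  rw [WithLp.equiv_symm_apply, EuclideanSpace.inner_toLp_toLp] at h
  simpa [vnorm, WithLp.equiv_symm_apply] using h

private lemma dotProduct_le {n : ℕ} (v w : Fin n → ℝ) : v ⬝ᵥ w ≤ vnorm v * vnorm w := by
  have h := real_inner_le_norm ((WithLp.equiv 2 (Fin n → ℝ)).symm v)
    ((WithLp.equiv 2 (Fin n → ℝ)).symm w)
  rw [WithLp.equiv_symm_apply, EuclideanSpace.inner_toLp_toLp,
    star_trivial, dotProduct_comm] at h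
  simpa [vnorm, WithLp.equiv_symm_apply] using h

private lemma posdef_aux {p q : ℕ} (B : Matrix (Fin q) (Fin p) ℝ) {β : ℝ} (hβ : 0 < β) :
    (Bᵀ * B + β • (1 : Matrix (Fin p) (Fin p) ℝ)).PosDef := by
  have h1 : (Bᵀ * B : Matrix (Fin p) (Fin p) ℝ).PosSemidef := by
    have := Matrix.posSemidef_conjTranspose_mul_self B
    rwa [Matrix.conjTranspose_eq_transpose_of_trivial] at this
  have h2 : (β • (1 : Matrix (Fin p) (Fin p) ℝ)).PosDef := by
    refine Matrix.PosDef.of_dotProduct_mulVec_pos ?_ (fun x hx => ?_)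
    · unfold Matrix.IsHermitian
      rw [Matrix.conjTranspose_eq_transpose_of_trivial]
      simp
    · have hsx : star x = x := by simp
      rw [Matrix.smul_mulVec, Matrix.one_mulVec, dotProduct_smul, hsx,
        smul_eq_mul, dotProduct_self_eq]
      have hv : vnorm x ≠ 0 := fun h => hx (vnorm_eq_zero h)
      have : 0 < vnorm x := lt_of_le_of_ne (vnorm_nonneg x) (Ne.symm hv)
      positivity
  exact Matrix.PosDef.posSemidef_add h1 h2

private lemma key_bound {p q : ℕ} (B : Matrix (Fin q) (Fin p) ℝ) {β : ℝ} (hβ : 0 < β)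
    (w : Fin p → ℝ) :
    β * vnorm w ≤ vnorm ((Bᵀ * B + β • 1) *ᵥ w) := by
  set M := Bᵀ * B + β • (1 : Matrix (Fin p) (Fin p) ℝ) with hM
  have h1 : w ⬝ᵥ (M *ᵥ w) = (B *ᵥ w) ⬝ᵥ (B *ᵥ w) + β * (w ⬝ᵥ w) := by
    rw [hM, Matrix.add_mulVec, dotProduct_add, Matrix.smul_mulVec,
      Matrix.one_mulVec, dotProduct_smul, smul_eq_mul, ← Matrix.mulVec_mulVec,
      Matrix.dotProduct_mulVec w Bᵀ, Matrix.vecMul_transpose]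
  have hBw : 0 ≤ (B *ᵥ w) ⬝ᵥ (B *ᵥ w) := by
    rw [dotProduct_self_eq]; positivity
  have h2 : β * vnorm w ^ 2 ≤ vnorm w * vnorm (M *ᵥ w) := by
    calc β * vnorm w ^ 2 = β * (w ⬝ᵥ w) := by rw [dotProduct_self_eq]
      _ ≤ w ⬝ᵥ (M *ᵥ w) := by rw [h1]; linarith
      _ ≤ vnorm w * vnorm (M *ᵥ w) := dotProduct_le _ _
  rcases eq_or_lt_of_le (vnorm_nonneg w) with h | h
  · rw [← h, mul_zero]; exact vnorm_nonneg _
  · nlinarith [vnorm_nonneg (M *ᵥ w)]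

private lemma inv_bound {p q : ℕ} (B : Matrix (Fin q) (Fin p) ℝ) {β : ℝ} (hβ : 0 < β)
    (r : Fin p → ℝ) :
    vnorm ((Bᵀ * B + β • 1)⁻¹ *ᵥ r) ≤ (1 / β) * vnorm r := by
  set M := Bᵀ * B + β • (1 : Matrix (Fin p) (Fin p) ℝ) with hM
  have hU : IsUnit M := (posdef_aux B hβ).isUnit
  have hMM : M * M⁻¹ = 1 := Matrix.mul_nonsing_inv M ((Matrix.isUnit_iff_isUnit_det M).mp hU)
  have h1 : M *ᵥ (M⁻¹ *ᵥ r) = r := by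
    rw [Matrix.mulVec_mulVec, hMM, Matrix.one_mulVec]
  have h2 := key_bound B hβ (M⁻¹ *ᵥ r)
  rw [← hM, h1] at h2
  calc vnorm (M⁻¹ *ᵥ r) = (1 / β) * (β * vnorm (M⁻¹ *ᵥ r)) := by
        field_simp
    _ ≤ (1 / β) * vnorm r := mul_le_mul_of_nonneg_left h2 (by positivity)

theorem regularized_least_squares_stability (p q : ℕ)
    (A δA : Matrix (Fin q) (Fin p) ℝ) (b δb : Fin q → ℝ)
    (x₀ : Fin p → ℝ) (β : ℝ) (hβ : 0 < β)
    (xs : Fin p → ℝ)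
    (hxs : xs = (Aᵀ * A + β • 1)⁻¹ *ᵥ (Aᵀ *ᵥ b + β • x₀))
    (xh : Fin p → ℝ)
    (hxh : xh = ((A + δA)ᵀ * (A + δA) + β • 1)⁻¹ *ᵥ
      ((A + δA)ᵀ *ᵥ (b + δb) + β • x₀))
    (P : Matrix (Fin p) (Fin p) ℝ)
    (hP : P = (A + δA)ᵀ * (A + δA) - Aᵀ * A) :
    vnorm (xh - xs) ≤
      (1 / β) * (mnorm P * vnorm xs + mnorm δA * vnorm b +
        vnorm δb * mnorm A + vnorm δb * mnorm δA) := by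
  set B := A + δA with hB
  set M := Aᵀ * A + β • (1 : Matrix (Fin p) (Fin p) ℝ) with hMdef
  set N := Bᵀ * B + β • (1 : Matrix (Fin p) (Fin p) ℝ) with hNdef
  -- M xs = Aᵀ b + β x₀
  have hMU : IsUnit M := (posdef_aux A hβ).isUnit
  have hMdet : IsUnit M.det := (Matrix.isUnit_iff_isUnit_det M).mp hMU
  have hMxs : M *ᵥ xs = Aᵀ *ᵥ b + β • x₀ := by
    rw [hxs, Matrix.mulVec_mulVec, Matrix.mul_nonsing_inv M hMdet, Matrix.one_mulVec]
  -- residual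
  set r : Fin p → ℝ := (-(P *ᵥ xs)) + δAᵀ *ᵥ b + Aᵀ *ᵥ δb + δAᵀ *ᵥ δb with hr
  have hNsub : N = M + P := by
    rw [hP, hMdef, hNdef]; abel
  have hdiff : xh - xs = N⁻¹ *ᵥ r := by
    have hNU : IsUnit N := (posdef_aux B hβ).isUnit
    have hNdet : IsUnit N.det := (Matrix.isUnit_iff_isUnit_det N).mp hNU
    have hxs' : xs = N⁻¹ *ᵥ (N *ᵥ xs) := by
      rw [Matrix.mulVec_mulVec, Matrix.nonsing_inv_mul N hNdet, Matrix.one_mulVec]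
    have hexp : Bᵀ *ᵥ (b + δb) + β • x₀ - N *ᵥ xs = r := by
      have h1 : Bᵀ *ᵥ (b + δb) = Aᵀ *ᵥ b + Aᵀ *ᵥ δb + δAᵀ *ᵥ b + δAᵀ *ᵥ δb := by
        simp only [hB, Matrix.transpose_add, Matrix.add_mulVec, Matrix.mulVec_add]
        abel
      have h2 : N *ᵥ xs = Aᵀ *ᵥ b + β • x₀ + P *ᵥ xs := by
        rw [hNsub, Matrix.add_mulVec, hMxs]
      rw [h1, h2, hr]
      abel
    rw [hxh, hxs', ← Matrix.mulVec_sub, hexp]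
  rw [hdiff]
  have hb1 := inv_bound B hβ r
  rw [← hNdef] at hb1
  have htri : vnorm r ≤ vnorm (P *ᵥ xs) + vnorm (δAᵀ *ᵥ b) + vnorm (Aᵀ *ᵥ δb)
      + vnorm (δAᵀ *ᵥ δb) := by
    calc vnorm r ≤ vnorm ((-(P *ᵥ xs)) + δAᵀ *ᵥ b + Aᵀ *ᵥ δb) + vnorm (δAᵀ *ᵥ δb) :=
          vnorm_add_le _ _
      _ ≤ vnorm ((-(P *ᵥ xs)) + δAᵀ *ᵥ b) + vnorm (Aᵀ *ᵥ δb) + vnorm (δAᵀ *ᵥ δb) := by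
          have := vnorm_add_le ((-(P *ᵥ xs)) + δAᵀ *ᵥ b) (Aᵀ *ᵥ δb)
          linarith
      _ ≤ vnorm (-(P *ᵥ xs)) + vnorm (δAᵀ *ᵥ b) + vnorm (Aᵀ *ᵥ δb) + vnorm (δAᵀ *ᵥ δb) := by
          have := vnorm_add_le (-(P *ᵥ xs)) (δAᵀ *ᵥ b)
          linarith
      _ = vnorm (P *ᵥ xs) + vnorm (δAᵀ *ᵥ b) + vnorm (Aᵀ *ᵥ δb) + vnorm (δAᵀ *ᵥ δb) := by
          rw [vnorm_neg]
  have e1 := vnorm_mulVec_le P xs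
  have e2 : vnorm (δAᵀ *ᵥ b) ≤ mnorm δA * vnorm b := by
    have := vnorm_mulVec_le δAᵀ b
    rwa [mnorm_transpose] at this
  have e3 : vnorm (Aᵀ *ᵥ δb) ≤ vnorm δb * mnorm A := by
    have := vnorm_mulVec_le Aᵀ δb
    rw [mnorm_transpose] at this
    linarith [this, mul_comm (mnorm A) (vnorm δb)]
  have e4 : vnorm (δAᵀ *ᵥ δb) ≤ vnorm δb * mnorm δA := by
    have := vnorm_mulVec_le δAᵀ δb
    rw [mnorm_transpose] at this
    linarith [this, mul_comm (mnorm δA) (vnorm δb)]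
  have hβ' : (0:ℝ) ≤ 1 / β := by positivity
  calc vnorm (N⁻¹ *ᵥ r) ≤ (1 / β) * vnorm r := hb1
    _ ≤ (1 / β) * (mnorm P * vnorm xs + mnorm δA * vnorm b +
        vnorm δb * mnorm A + vnorm δb * mnorm δA) := by
      apply mul_le_mul_of_nonneg_left _ hβ'
      linarith
end

section
/- Let Z_λ and Z₀ be the solutions of the regularized symmetric Procrustes problem min_{Z=Zᵀ} ‖ZA − D‖_F² + (λ/2)‖Z − Z_ref‖_F² for parameter λ > 0 and for the limit λ → 0 respectively. Then ‖Z_λ − Z₀‖_F ≤ 5λ‖Z₀ − Z_ref‖_F / (σ_min²(A) + λ), where σ_min(A) is the smallest nonzero singular value of A. -/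
open Matrix

namespace RegAux

variable {k l : Type*} [Fintype k] [Fintype l]

noncomputable def minner (X Y : Matrix k l ℝ) : ℝ := ∑ i, ∑ j, X i j * Y i j

lemma frobSq_eq_minner (X : Matrix k l ℝ) : frobSq X = minner X X := by
  simp [frobSq, minner, sq]

lemma minner_comm (X Y : Matrix k l ℝ) : minner X Y = minner Y X := by
  simp [minner, mul_comm]

lemma frobSq_nonneg (X : Matrix k l ℝ) : 0 ≤ frobSq X :=
  Finset.sum_nonneg fun _ _ => Finset.sum_nonneg fun _ _ => sq_nonneg _

lemma frobSq_eq_zero {X : Matrix k l ℝ} (h : frobSq X = 0) : X = 0 := by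
  ext i j
  have h1 : ∀ i ∈ Finset.univ (α := k), (∑ j, (X i j)^2) = 0 := by
    rw [← Finset.sum_eq_zero_iff_of_nonneg]
    · exact h
    · intro i _; exact Finset.sum_nonneg fun _ _ => sq_nonneg _
  have h2 := (Finset.sum_eq_zero_iff_of_nonneg (fun j _ => sq_nonneg (X i j))).1
    (h1 i (Finset.mem_univ i)) j (Finset.mem_univ j)
  exact pow_eq_zero_iff two_ne_zero |>.mp h2

lemma frobSq_add (X Y : Matrix k l ℝ) :
    frobSq (X + Y) = frobSq X + 2 * minner X Y + frobSq Y := by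
  simp only [frobSq, minner, Matrix.add_apply, Finset.mul_sum, ← Finset.sum_add_distrib]
  exact Finset.sum_congr rfl fun i _ => Finset.sum_congr rfl fun j _ => by ring

lemma minner_smul_right (X Y : Matrix k l ℝ) (t : ℝ) :
    minner X (t • Y) = t * minner X Y := by
  simp only [minner, Matrix.smul_apply, smul_eq_mul, Finset.mul_sum]
  exact Finset.sum_congr rfl fun i _ => Finset.sum_congr rfl fun j _ => by ring

lemma frobSq_smul (t : ℝ) (X : Matrix k l ℝ) : frobSq (t • X) = t^2 * frobSq X := by
  simp only [frobSq, Matrix.smul_apply, smul_eq_mul, Finset.mul_sum]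
  exact Finset.sum_congr rfl fun i _ => Finset.sum_congr rfl fun j _ => by ring

lemma minner_sub_left (X Y Z : Matrix k l ℝ) :
    minner (X - Y) Z = minner X Z - minner Y Z := by
  simp only [minner, Matrix.sub_apply, ← Finset.sum_sub_distrib]
  exact Finset.sum_congr rfl fun i _ => Finset.sum_congr rfl fun j _ => by ring

lemma minner_cauchy (X Y : Matrix k l ℝ) :
    minner X Y ≤ Real.sqrt (frobSq X) * Real.sqrt (frobSq Y) := by
  have h1 : minner X Y = ∑ p : k × l, X p.1 p.2 * Y p.1 p.2 := by
    rw [minner, ← Finset.sum_product']; rfl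
  have h2 : frobSq X = ∑ p : k × l, (X p.1 p.2)^2 := by
    rw [frobSq, ← Finset.sum_product']; rfl
  have h3 : frobSq Y = ∑ p : k × l, (Y p.1 p.2)^2 := by
    rw [frobSq, ← Finset.sum_product']; rfl
  rw [h1, h2, h3]
  exact Real.sum_mul_le_sqrt_mul_sqrt _ _ _

lemma minner_trace [DecidableEq k] (X Y : Matrix k l ℝ) :
    minner X Y = trace (X * Yᴴ) := by
  simp [minner, trace, Matrix.mul_apply, Matrix.conjTranspose_apply, diag]

lemma frobSq_trace [DecidableEq k] (X : Matrix k l ℝ) : frobSq X = trace (X * Xᴴ) := by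
  rw [frobSq_eq_minner, minner_trace]


lemma frobSq_sub {k l : Type*} [Fintype k] [Fintype l] (X Y : Matrix k l ℝ) :
    frobSq (X - Y) = frobSq X - 2 * minner X Y + frobSq Y := by
  simp only [frobSq, minner, Matrix.sub_apply, Finset.mul_sum, ← Finset.sum_add_distrib,
    ← Finset.sum_sub_distrib]
  exact Finset.sum_congr rfl fun i _ => Finset.sum_congr rfl fun j _ => by ring

lemma minner_sub_right {k l : Type*} [Fintype k] [Fintype l] (X Y Z : Matrix k l ℝ) :
    minner X (Y - Z) = minner X Y - minner X Z := by
  simp only [minner, Matrix.sub_apply, ← Finset.sum_sub_distrib]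
  exact Finset.sum_congr rfl fun i _ => Finset.sum_congr rfl fun j _ => by ring

lemma minner_neg_left {k l : Type*} [Fintype k] [Fintype l] (X Y : Matrix k l ℝ) :
    minner (-X) Y = -minner X Y := by
  simp only [minner, Matrix.neg_apply, ← Finset.sum_neg_distrib]
  exact Finset.sum_congr rfl fun i _ => Finset.sum_congr rfl fun j _ => by ring

lemma frobSq_neg {k l : Type*} [Fintype k] [Fintype l] (X : Matrix k l ℝ) :
    frobSq (-X) = frobSq X := by
  simp [frobSq]

lemma spectral_key (d m : ℕ) (A : Matrix (Fin d) (Fin m) ℝ) (σ2 : ℝ) (hσ2 : 0 < σ2)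
    (hσmin : ∀ μ : ℝ, μ ≠ 0 →
      Module.End.HasEigenvalue (Matrix.mulVecLin (Aᵀ * A)) μ → σ2 ≤ μ)
    (E : Matrix (Fin d) (Fin d) ℝ) (hEs : E.IsSymm)
    (hEperp : ∀ S : Matrix (Fin d) (Fin d) ℝ, S.IsSymm → S * A = 0 → minner E S = 0) :
    σ2 / 2 * frobSq E ≤ frobSq (E * A) := by
  classical
  set B : Matrix (Fin d) (Fin d) ℝ := A * Aᴴ with hBdef
  have hB : B.IsHermitian := isHermitian_mul_conjTranspose_self A
  set V : Matrix (Fin d) (Fin d) ℝ := (hB.eigenvectorUnitary : Matrix (Fin d) (Fin d) ℝ)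
    with hVdef
  set W : Matrix (Fin d) (Fin d) ℝ := star V with hWdef
  have hVW : V * W = 1 := mem_unitaryGroup_iff.mp hB.eigenvectorUnitary.2
  have hWV : W * V = 1 := mem_unitaryGroup_iff'.mp hB.eigenvectorUnitary.2
  set μ : Fin d → ℝ := hB.eigenvalues with hμdef
  have hspec : B = V * diagonal μ * W := by
    have := hB.spectral_theorem
    rwa [RCLike.ofReal_real_eq_id, Function.id_comp] at this
  -- eigenvalue lower bound
  have L1 : ∀ i, μ i ≠ 0 → σ2 ≤ μ i := by
    intro i hi
    have hv : B *ᵥ ⇑(hB.eigenvectorBasis i) = μ i • ⇑(hB.eigenvectorBasis i) :=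
      hB.mulVec_eigenvectorBasis i
    have hvne : (⇑(hB.eigenvectorBasis i) : Fin d → ℝ) ≠ 0 := by
      intro h
      exact hB.eigenvectorBasis.orthonormal.ne_zero i (by ext j; exact congrFun h j)
    set v : Fin d → ℝ := ⇑(hB.eigenvectorBasis i) with hvdef
    set w : Fin m → ℝ := Aᵀ *ᵥ v with hwdef
    have hAH : Aᴴ = Aᵀ := conjTranspose_eq_transpose_of_trivial A
    have h1 : A *ᵥ w = μ i • v := by
      rw [hwdef, Matrix.mulVec_mulVec, ← hAH, ← hBdef, hv]
    have hw : w ≠ 0 := by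
      intro h
      rw [h, Matrix.mulVec_zero] at h1
      exact smul_ne_zero hi hvne h1.symm
    have h2 : (Aᵀ * A) *ᵥ w = μ i • w := by
      rw [← Matrix.mulVec_mulVec, h1, Matrix.mulVec_smul]
    have heig : Module.End.HasEigenvalue (Matrix.mulVecLin (Aᵀ * A)) (μ i) :=
      Module.End.hasEigenvalue_of_hasEigenvector
        ⟨Module.End.mem_eigenspace_iff.mpr (by rw [Matrix.mulVecLin_apply]; exact h2), hw⟩
    exact hσmin _ hi heig
  -- conjugation helpers
  have hVH : Vᴴ = W := by rw [hWdef, Matrix.star_eq_conjTranspose]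
  have hWH : Wᴴ = V := by rw [hWdef, Matrix.star_eq_conjTranspose, conjTranspose_conjTranspose]
  have htr : ∀ M : Matrix (Fin d) (Fin d) ℝ, trace M = ∑ i, M i i := fun M => rfl
  have hconj : ∀ X Y : Matrix (Fin d) (Fin d) ℝ,
      (V * X * W) * (V * Y * W) = V * (X * Y) * W := by
    intro X Y
    calc (V * X * W) * (V * Y * W) = V * (X * ((W * V) * (Y * W))) := by
          simp only [mul_assoc]
    _ = V * (X * Y) * W := by rw [hWV, one_mul, mul_assoc, mul_assoc]
  have tconj : ∀ X : Matrix (Fin d) (Fin d) ℝ, trace (V * X * W) = trace X := by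
    intro X
    rw [trace_mul_cycle, hWV, one_mul]
  have hEH : Eᴴ = E := by rw [conjTranspose_eq_transpose_of_trivial]; exact hEs
  set Et : Matrix (Fin d) (Fin d) ℝ := W * E * V with hEtdef
  have hErep : V * Et * W = E := by
    calc V * (W * E * V) * W = (V * W) * (E * (V * W)) := by simp only [mul_assoc]
    _ = E := by rw [hVW, one_mul, mul_one]
  have hEtH : Etᴴ = Et := by
    rw [hEtdef, conjTranspose_mul (W * E) V, conjTranspose_mul W E, hVH, hWH, hEH, mul_assoc]
  have hEtsym : ∀ i j, Et i j = Et j i := by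
    intro i j
    have := congrFun (congrFun hEtH i) j
    rw [conjTranspose_apply] at this
    simpa using this.symm
  -- frobSq in coordinates
  have hfE : frobSq E = ∑ i, ∑ j, (Et i j)^2 := by
    rw [← hErep, frobSq_trace, conjTranspose_mul (V * Et) W, conjTranspose_mul V Et,
      hWH, hVH, hEtH, ← mul_assoc V Et W, hconj, tconj, htr]
    simp only [Matrix.mul_apply]
    exact Finset.sum_congr rfl fun i _ => Finset.sum_congr rfl fun j _ => by
      rw [hEtsym j i]; ring
  have hAH : Aᴴ = Aᵀ := conjTranspose_eq_transpose_of_trivial A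
  have hfEA : frobSq (E * A) = ∑ i, ∑ j, μ j * (Et i j)^2 := by
    have e1 : E * A * (E * A)ᴴ = V * (Et * diagonal μ * Et) * W := by
      rw [conjTranspose_mul E A, hEH]
      calc E * A * (Aᴴ * E) = E * (A * Aᴴ) * E := by simp only [Matrix.mul_assoc]
      _ = E * B * E := by rw [hBdef]
      _ = (V * Et * W) * (V * diagonal μ * W) * (V * Et * W) := by rw [hErep, ← hspec]
      _ = V * (Et * diagonal μ * Et) * W := by rw [hconj, hconj]
    rw [frobSq_trace, e1, tconj, htr]
    refine Finset.sum_congr rfl fun i _ => ?_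
    rw [Matrix.mul_apply]
    refine Finset.sum_congr rfl fun j _ => ?_
    rw [Matrix.mul_diagonal, hEtsym j i]
    ring
  -- projection Q
  set ind0 : Fin d → ℝ := fun i => if μ i = 0 then 1 else 0 with hind0
  set D0 : Matrix (Fin d) (Fin d) ℝ := diagonal ind0 with hD0
  set Q : Matrix (Fin d) (Fin d) ℝ := V * D0 * W with hQdef
  have hD0H : D0ᴴ = D0 := by
    rw [hD0, diagonal_conjTranspose]
    congr 1
  have hind00 : (fun i => ind0 i * ind0 i) = ind0 := by
    funext i
    simp only [hind0]
    by_cases h : μ i = 0 <;> simp [h]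
  have hQH : Qᴴ = Q := by
    rw [hQdef, conjTranspose_mul (V * D0) W, conjTranspose_mul V D0, hWH, hVH, hD0H, mul_assoc]
  have hQQ : Q * Q = Q := by
    rw [hQdef, hconj, hD0, diagonal_mul_diagonal, hind00]
  have e3 : (fun i => ind0 i * μ i * ind0 i) = (0 : Fin d → ℝ) := by
    funext i
    simp only [Pi.zero_apply, hind0]
    by_cases h : μ i = 0 <;> simp [h]
  have hQA : Q * A = 0 := by
    apply frobSq_eq_zero
    rw [frobSq_trace, conjTranspose_mul Q A, hQH]
    have e2 : Q * A * (Aᴴ * Q) = V * (D0 * diagonal μ * D0) * W := by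
      calc Q * A * (Aᴴ * Q) = Q * (A * Aᴴ) * Q := by simp only [Matrix.mul_assoc]
      _ = Q * B * Q := by rw [hBdef]
      _ = V * (D0 * diagonal μ * D0) * W := by rw [hQdef, hspec, hconj, hconj]
    rw [e2, hD0, diagonal_mul_diagonal, diagonal_mul_diagonal, e3]
    rw [show Matrix.diagonal (0 : Fin d → ℝ) = 0 from Matrix.diagonal_zero, mul_zero, zero_mul,
      trace_zero]
  -- perpendicularity gives Q E Q = 0
  set S : Matrix (Fin d) (Fin d) ℝ := Q * E * Q with hSdef
  have hSH : Sᴴ = S := by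
    rw [hSdef, conjTranspose_mul (Q * E) Q, conjTranspose_mul Q E, hQH, hEH, ← mul_assoc]
  have hSs : S.IsSymm := by
    rw [Matrix.IsSymm, ← conjTranspose_eq_transpose_of_trivial, hSH]
  have hSA : S * A = 0 := by
    rw [hSdef, Matrix.mul_assoc (Q * E) Q A, hQA, Matrix.mul_zero]
  have hperp : minner E S = 0 := hEperp S hSs hSA
  have hfS : frobSq S = minner E S := by
    rw [frobSq_trace, minner_trace, hSH, hSdef]
    calc trace (Q * E * Q * (Q * E * Q))
        = trace (Q * (E * ((Q * Q) * (E * Q)))) := by simp only [mul_assoc]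
      _ = trace (Q * (E * (Q * (E * Q)))) := by rw [hQQ]
      _ = trace ((E * (Q * (E * Q))) * Q) := trace_mul_comm _ _
      _ = trace (E * (Q * (E * (Q * Q)))) := by simp only [mul_assoc]
      _ = trace (E * (Q * E * Q)) := by rw [hQQ]; simp only [mul_assoc]
  have hS0 : S = 0 := frobSq_eq_zero (by rw [hfS, hperp])
  have hWQ : W * Q = D0 * W := by
    rw [hQdef]
    calc W * (V * D0 * W) = (W * V) * (D0 * W) := by simp only [mul_assoc]
    _ = D0 * W := by rw [hWV, one_mul]
  have hQV : Q * V = V * D0 := by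
    rw [hQdef]
    calc V * D0 * W * V = V * (D0 * (W * V)) := by simp only [mul_assoc]
    _ = V * D0 := by rw [hWV, mul_one]
  have e4 : D0 * Et * D0 = 0 := by
    have e5 : W * S * V = D0 * Et * D0 := by
      rw [hSdef, hEtdef]
      calc W * (Q * E * Q) * V = (W * Q) * (E * (Q * V)) := by simp only [mul_assoc]
      _ = (D0 * W) * (E * (V * D0)) := by rw [hWQ, hQV]
      _ = D0 * (W * E * V) * D0 := by simp only [mul_assoc]
    rw [← e5, hS0, mul_zero, zero_mul]
  have hcoord : ∀ i j, μ i = 0 → μ j = 0 → Et i j = 0 := by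
    intro i j hi hj
    have e6 := congrFun (congrFun e4 i) j
    rw [Matrix.mul_apply] at e6
    simp only [Matrix.zero_apply] at e6
    have e7 : ∑ k, (D0 * Et) i k * D0 k j = (D0 * Et) i j * 1 := by
      rw [Finset.sum_eq_single j]
      · rw [hD0, diagonal_apply_eq]
        simp [hind0, hj]
      · intro b _ hb
        rw [hD0, diagonal_apply_ne _ hb, mul_zero]
      · intro h; exact absurd (Finset.mem_univ j) h
    rw [e7, mul_one, hD0, Matrix.diagonal_mul] at e6
    simpa [hind0, hi] using e6
  -- final counting
  set T : ℝ := ∑ i, ∑ j, (if μ j = 0 then 0 else (Et i j)^2) with hT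
  have hT1 : σ2 * T ≤ frobSq (E * A) := by
    rw [hfEA, hT, Finset.mul_sum]
    refine Finset.sum_le_sum fun i _ => ?_
    rw [Finset.mul_sum]
    refine Finset.sum_le_sum fun j _ => ?_
    by_cases h : μ j = 0
    · simp [h]
    · simp only [if_neg h]
      exact mul_le_mul_of_nonneg_right (L1 j h) (sq_nonneg _)
  have hT2 : frobSq E ≤ 2 * T := by
    have hTswap : T = ∑ i, ∑ j, (if μ i = 0 then 0 else (Et i j)^2) := by
      rw [hT, Finset.sum_comm]
      refine Finset.sum_congr rfl fun i _ => Finset.sum_congr rfl fun j _ => ?_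
      rw [hEtsym i j]
    rw [hfE, two_mul]
    calc ∑ i, ∑ j, (Et i j)^2
        ≤ ∑ i, ∑ j, ((if μ j = 0 then 0 else (Et i j)^2)
          + (if μ i = 0 then 0 else (Et i j)^2)) := by
          refine Finset.sum_le_sum fun i _ => Finset.sum_le_sum fun j _ => ?_
          by_cases hi : μ i = 0 <;> by_cases hj : μ j = 0 <;>
            simp [hi, hj, hcoord i j, sq_nonneg (Et i j)]
      _ = T + T := by
          nth_rewrite 2 [hTswap]
          nth_rewrite 1 [hT]
          rw [← Finset.sum_add_distrib]
          exact Finset.sum_congr rfl fun i _ => by rw [← Finset.sum_add_distrib]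
  have hstep : σ2 / 2 * frobSq E ≤ σ2 / 2 * (2 * T) :=
    mul_le_mul_of_nonneg_left hT2 (by positivity)
  have hstep2 : σ2 / 2 * (2 * T) = σ2 * T := by ring
  linarith [hT1, hstep, hstep2]

lemma minner_eq_zero_of_min {k l : Type*} [Fintype k] [Fintype l] (X S : Matrix k l ℝ)
    (h : ∀ t : ℝ, frobSq X ≤ frobSq (X + t • S)) : minner X S = 0 := by
  have hexp : ∀ t : ℝ, frobSq (X + t • S)
      = frobSq X + 2 * (t * minner X S) + t^2 * frobSq S := by
    intro t; rw [frobSq_add, minner_smul_right, frobSq_smul]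
  by_cases hn : frobSq S = 0
  · rw [frobSq_eq_zero hn]; simp [minner]
  · have hpos : 0 < frobSq S := lt_of_le_of_ne (frobSq_nonneg S) (Ne.symm hn)
    set c := minner X S with hc
    have h1 := h (-(c / frobSq S))
    rw [hexp] at h1
    have h2 : 0 ≤ 2 * (-(c / frobSq S) * c) + (-(c / frobSq S))^2 * frobSq S := by linarith
    have h3 : 2 * (-(c / frobSq S) * c) + (-(c / frobSq S))^2 * frobSq S
        = -(c^2 / frobSq S) := by
      field_simp
      ring
    rw [h3] at h2
    have h4 : c^2 / frobSq S ≤ 0 := by linarith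
    have h5 : c^2 ≤ 0 := by
      by_contra hcon
      push_neg at hcon
      have : 0 < c^2 / frobSq S := div_pos hcon hpos
      linarith
    exact pow_eq_zero_iff two_ne_zero |>.mp (le_antisymm h5 (sq_nonneg c))

end RegAux

open RegAux

theorem regularization_bias_bound (d m : ℕ) (hm : m ≤ d)
    (A D : Matrix (Fin d) (Fin m) ℝ)
    (Zref : Matrix (Fin d) (Fin d) ℝ) (hZref : Zref.IsSymm)
    (lam : ℝ) (hlam : 0 < lam)
    -- `Zlam` is the solution of the regularized symmetric Procrustes problem
    (Zlam : Matrix (Fin d) (Fin d) ℝ) (hZlams : Zlam.IsSymm)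
    (hZlam : ∀ Z : Matrix (Fin d) (Fin d) ℝ, Z.IsSymm →
      frobSq (Zlam * A - D) + lam / 2 * frobSq (Zlam - Zref) ≤
        frobSq (Z * A - D) + lam / 2 * frobSq (Z - Zref))
    -- `Z₀` is the λ → 0 solution: it minimizes ‖ZA − D‖²_F over symmetric Z,
    -- and among those minimizers it minimizes ‖Z − Z_ref‖_F
    (Z₀ : Matrix (Fin d) (Fin d) ℝ) (hZ₀s : Z₀.IsSymm)
    (hZ₀min : ∀ Z : Matrix (Fin d) (Fin d) ℝ, Z.IsSymm →
      frobSq (Z₀ * A - D) ≤ frobSq (Z * A - D))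
    (hZ₀reg : ∀ Z : Matrix (Fin d) (Fin d) ℝ, Z.IsSymm →
      frobSq (Z * A - D) = frobSq (Z₀ * A - D) →
      frobSq (Z₀ - Zref) ≤ frobSq (Z - Zref))
    -- `σmin` is the smallest nonzero singular value of `A`
    (σmin : ℝ) (hσpos : 0 < σmin)
    (hσeig : Module.End.HasEigenvalue (Matrix.mulVecLin (Aᵀ * A)) (σmin ^ 2))
    (hσmin : ∀ μ : ℝ, μ ≠ 0 →
      Module.End.HasEigenvalue (Matrix.mulVecLin (Aᵀ * A)) μ → σmin ^ 2 ≤ μ) :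
    Real.sqrt (frobSq (Zlam - Z₀)) ≤
      5 * lam * Real.sqrt (frobSq (Z₀ - Zref)) / (σmin ^ 2 + lam) := by
  classical
  set E : Matrix (Fin d) (Fin d) ℝ := Zlam - Z₀ with hEdef
  have hEs : E.IsSymm := by
    show Eᵀ = E
    rw [hEdef, transpose_sub, hZlams, hZ₀s]
  -- perpendicularity hypothesis for spectral_key
  have hEperp : ∀ S : Matrix (Fin d) (Fin d) ℝ, S.IsSymm → S * A = 0 → minner E S = 0 := by
    intro S hSs hSA0
    have hmul : ∀ (Z : Matrix (Fin d) (Fin d) ℝ) (t : ℝ), (Z + t • S) * A = Z * A := by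
      intro Z t
      rw [Matrix.add_mul, Matrix.smul_mul, hSA0, smul_zero, add_zero]
    have hsym : ∀ (Z : Matrix (Fin d) (Fin d) ℝ) (_ : Z.IsSymm) (t : ℝ), (Z + t • S).IsSymm := by
      intro Z hZ t
      show (Z + t • S)ᵀ = Z + t • S
      rw [transpose_add, transpose_smul, hZ, hSs]
    have hadd : ∀ (Z : Matrix (Fin d) (Fin d) ℝ) (t : ℝ),
        Z + t • S - Zref = (Z - Zref) + t • S := by
      intro Z t
      abel
    have c1 : minner (Zlam - Zref) S = 0 := by
      apply minner_eq_zero_of_min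
      intro t
      have h := hZlam (Zlam + t • S) (hsym Zlam hZlams t)
      rw [hmul Zlam t, hadd Zlam t] at h
      have h2 : lam / 2 * frobSq (Zlam - Zref) ≤ lam / 2 * frobSq (Zlam - Zref + t • S) := by
        linarith
      have hl2 : (0:ℝ) < lam / 2 := by linarith
      exact le_of_mul_le_mul_left h2 hl2
    have c2 : minner (Z₀ - Zref) S = 0 := by
      apply minner_eq_zero_of_min
      intro t
      have h := hZ₀reg (Z₀ + t • S) (hsym Z₀ hZ₀s t) (by rw [hmul Z₀ t])
      rwa [hadd Z₀ t] at h
    have hEsplit : E = (Zlam - Zref) - (Z₀ - Zref) := by rw [hEdef]; abel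
    rw [hEsplit, minner_sub_left, c1, c2, sub_zero]
  have key2 : σmin ^ 2 / 2 * frobSq E ≤ frobSq (E * A) :=
    spectral_key d m A (σmin ^ 2) (by positivity) hσmin E hEs hEperp
  -- midpoint inequality
  set x : Matrix (Fin d) (Fin m) ℝ := Zlam * A - D with hx
  set y : Matrix (Fin d) (Fin m) ℝ := Z₀ * A - D with hy
  set u : Matrix (Fin d) (Fin d) ℝ := Zlam - Zref with hu
  set v : Matrix (Fin d) (Fin d) ℝ := Z₀ - Zref with hv
  have hMs : (((1:ℝ)/2) • (Zlam + Z₀)).IsSymm := by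
    show (((1:ℝ)/2) • (Zlam + Z₀))ᵀ = ((1:ℝ)/2) • (Zlam + Z₀)
    rw [transpose_smul, transpose_add, hZlams, hZ₀s]
  have hM := hZlam (((1:ℝ)/2) • (Zlam + Z₀)) hMs
  have idM1 : (((1:ℝ)/2) • (Zlam + Z₀)) * A - D = ((1:ℝ)/2) • (x + y) := by
    rw [Matrix.smul_mul, Matrix.add_mul, hx, hy]
    module
  have idM2 : ((1:ℝ)/2) • (Zlam + Z₀) - Zref = ((1:ℝ)/2) • (u + v) := by
    rw [hu, hv]
    module
  rw [idM1, idM2, frobSq_smul, frobSq_smul, frobSq_add, frobSq_add] at hM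
  have hg0 : frobSq y ≤ frobSq x := hZ₀min Zlam hZlams
  have idEA : E * A = x - y := by
    rw [hEdef, Matrix.sub_mul, hx, hy]
    abel
  have idE : E = u - v := by rw [hEdef, hu, hv]; abel
  have hfEA2 : frobSq (E * A) = frobSq x - 2 * minner x y + frobSq y := by
    rw [idEA, frobSq_sub]
  have hfE2 : frobSq E = frobSq u - 2 * minner u v + frobSq v := by
    rw [idE, frobSq_sub]
  have key1 : (1/2) * frobSq (E * A) + (3 * lam / 4) * frobSq E
      ≤ lam * (frobSq v - minner v u) := by
    have hmc : minner u v = minner v u := minner_comm u v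
    nlinarith [hM, hg0, hfEA2, hfE2, hlam]
  -- Cauchy-Schwarz
  set a : ℝ := Real.sqrt (frobSq (Z₀ - Zref)) with ha
  set e : ℝ := Real.sqrt (frobSq (Zlam - Z₀)) with he
  have hEfs : frobSq (Zlam - Z₀) = frobSq E := by rw [hEdef]
  have hGe : frobSq E = e * e := by
    rw [← hEfs]
    exact (Real.mul_self_sqrt (frobSq_nonneg _)).symm
  have hanneg : 0 ≤ a := Real.sqrt_nonneg _
  have henneg : 0 ≤ e := Real.sqrt_nonneg _
  have hCS : minner (Zref - Z₀) E ≤ a * e := by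
    have h2 : Zref - Z₀ = -(Z₀ - Zref) := by abel
    rw [h2, ha, he, ← hEfs]
    have h1 := minner_cauchy (-(Z₀ - Zref)) E
    rwa [frobSq_neg, hEfs] at h1
  have heq : minner (Zref - Z₀) E = frobSq v - minner v u := by
    have h2 : Zref - Z₀ = -v := by rw [hv]; abel
    rw [h2, idE, minner_neg_left, minner_sub_right, frobSq_eq_minner]
    ring
  have heq2 : lam * (frobSq v - minner v u) ≤ lam * (a * e) := by
    rw [← heq]
    exact mul_le_mul_of_nonneg_left hCS hlam.le
  have hfinal : (σmin ^ 2 + 3 * lam) * frobSq E ≤ 4 * (lam * (a * e)) := by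
    linarith [key1, key2, heq2]
  rw [hGe] at hfinal
  have hden : (0:ℝ) < σmin ^ 2 + lam := by positivity
  rw [le_div_iff₀ hden]
  rcases eq_or_lt_of_le henneg with h0 | hepos
  · rw [← h0]
    simp only [zero_mul]
    positivity
  · have h6 : ((σmin ^ 2 + 3 * lam) * e) * e ≤ (4 * (lam * a)) * e := by
      calc ((σmin ^ 2 + 3 * lam) * e) * e = (σmin ^ 2 + 3 * lam) * (e * e) := by ring
      _ ≤ 4 * (lam * (a * e)) := hfinal
      _ = (4 * (lam * a)) * e := by ring
    have h5 : (σmin ^ 2 + 3 * lam) * e ≤ 4 * (lam * a) := le_of_mul_le_mul_right h6 hepos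
    have hle : 0 ≤ lam * e := mul_nonneg hlam.le henneg
    have hla : 0 ≤ lam * a := mul_nonneg hlam.le hanneg
    clear hM hEperp hZlam hZ₀min hZ₀reg hσmin key1 key2 hfinal h6 hCS heq heq2 hGe
    nlinarith [h5, hle, hla]
end
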